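/- arXiv:2212.04014 — 5 statements merged into one kernel-verified Lean document; each statement's English description precedes it below -/
import Mathlib

section
/- For a pseudo self-concordant function f with parameter R, the Hessian satisfies e^{−R‖y−x‖₂} ∇²f(x) ⪯ ∇²f(y) ⪯ e^{R‖y−x‖₂} ∇²f(x) for all x, y ∈ ℝ^p. -/
open Set ContinuousLinearMap

section Aux

variable {E : Type*} [NormedAddCommGroup E] [NormedSpace ℝ E]

private lemma iteratedFDeriv_three_apply' (f : E → ℝ) (z : E) (a b c : E) :
    iteratedFDeriv ℝ 3 f z ![a, b, c] =
      fderiv ℝ (fderiv ℝ (fderiv ℝ f)) z a b c := by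
  have h := iteratedFDeriv_succ_apply_right (𝕜 := ℝ) (f := f) (x := z) (n := 2) ![a, b, c]
  rw [h, iteratedFDeriv_two_apply]
  congr 1

private lemma iteratedFDeriv_two_apply' (f : E → ℝ) (z : E) (a b : E) :
    iteratedFDeriv ℝ 2 f z ![a, b] = fderiv ℝ (fderiv ℝ f) z a b := by
  rw [iteratedFDeriv_two_apply]
  congr 1

variable {f : E → ℝ}

private lemma D2_diff (hf : ContDiff ℝ 3 f) : Differentiable ℝ (fderiv ℝ (fderiv ℝ f)) := by
  have h1 : ContDiff ℝ 2 (fderiv ℝ f) := hf.fderiv_right (by norm_num)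
  have h2 : ContDiff ℝ 1 (fderiv ℝ (fderiv ℝ f)) := h1.fderiv_right (by norm_num)
  exact h2.differentiable (by norm_num)

private lemma D1_diff (hf : ContDiff ℝ 3 f) : Differentiable ℝ (fderiv ℝ f) :=
  (hf.fderiv_right (m := 2) (by norm_num)).differentiable (by norm_num)

private lemma hasFDerivAt_D2_apply (hf : ContDiff ℝ 3 f) (z b c : E) :
    HasFDerivAt (fun y => fderiv ℝ (fderiv ℝ f) y b c)
      (((apply ℝ ℝ c).comp (apply ℝ (E →L[ℝ] ℝ) b)).comp
        (fderiv ℝ (fderiv ℝ (fderiv ℝ f)) z)) z := by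
  have hD : HasFDerivAt (fderiv ℝ (fderiv ℝ f)) (fderiv ℝ (fderiv ℝ (fderiv ℝ f)) z) z :=
    (D2_diff hf z).hasFDerivAt
  simpa [Function.comp_def] using
    (HasFDerivAt.comp (g := ⇑((apply ℝ ℝ c).comp (apply ℝ (E →L[ℝ] ℝ) b))) z
      (((apply ℝ ℝ c).comp (apply ℝ (E →L[ℝ] ℝ) b)).hasFDerivAt) hD)

private lemma D3_symm12 (hf : ContDiff ℝ 3 f) (z a b c : E) :
    fderiv ℝ (fderiv ℝ (fderiv ℝ f)) z a b c =
    fderiv ℝ (fderiv ℝ (fderiv ℝ f)) z b a c := by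
  have h := second_derivative_symmetric (f := fderiv ℝ f)
    (f' := fderiv ℝ (fderiv ℝ f)) (f'' := fderiv ℝ (fderiv ℝ (fderiv ℝ f)) z) (x := z)
    (fun y => (D1_diff hf y).hasFDerivAt) ((D2_diff hf z).hasFDerivAt) a b
  exact congrFun (congrArg _ h) c

private lemma D3_symm23 (hf : ContDiff ℝ 3 f) (z a b c : E) :
    fderiv ℝ (fderiv ℝ (fderiv ℝ f)) z a b c =
    fderiv ℝ (fderiv ℝ (fderiv ℝ f)) z a c b := by
  have hsym : ∀ y : E, fderiv ℝ (fderiv ℝ f) y b c = fderiv ℝ (fderiv ℝ f) y c b := fun y =>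
    second_derivative_symmetric (fun w => ((hf.differentiable (by norm_num)) w).hasFDerivAt)
      ((D1_diff hf y).hasFDerivAt) b c
  have h1 := (hasFDerivAt_D2_apply hf z b c).fderiv
  have h2 := (hasFDerivAt_D2_apply hf z c b).fderiv
  have h : fderiv ℝ (fun y => fderiv ℝ (fderiv ℝ f) y b c) z =
      fderiv ℝ (fun y => fderiv ℝ (fderiv ℝ f) y c b) z := by
    congr 1; funext y; exact hsym y
  rw [h1, h2] at h
  exact congrFun (congrArg DFunLike.coe h) a

private lemma mono_hasDerivAt_nonneg {φ : ℝ → ℝ} (hm : Monotone φ) {d a : ℝ}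
    (hd : HasDerivAt φ d a) : 0 ≤ d := by
  have ht := hasDerivAt_iff_tendsto_slope.mp hd
  refine ge_of_tendsto ht ?_
  filter_upwards [self_mem_nhdsWithin] with t (ht' : t ≠ a)
  rcases lt_or_gt_of_ne ht' with h | h
  · rw [slope_def_field]
    exact div_nonneg_iff.mpr (Or.inr ⟨by simpa using hm h.le, by linarith⟩)
  · rw [slope_def_field]
    exact div_nonneg (by simpa using hm h.le) (by linarith)

private lemma hess_nonneg (hf : ContDiff ℝ 3 f) (hconv : ConvexOn ℝ Set.univ f)
    (z u : E) : 0 ≤ fderiv ℝ (fderiv ℝ f) z u u := by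
  set A : ℝ →ᵃ[ℝ] E := AffineMap.lineMap z (z + u) with hA
  have hAt : ∀ t : ℝ, A t = z + t • u := by
    intro t; simp [hA, AffineMap.lineMap_apply, add_comm]
  have hψconv : ConvexOn ℝ Set.univ (f ∘ A) := by
    have := hconv.comp_affineMap A
    simpa using this
  have hcurve : ∀ t : ℝ, HasDerivAt (fun s : ℝ => z + s • u) u t := by
    intro t
    simpa using ((hasDerivAt_id t).smul_const u).const_add z
  have hψd : ∀ t : ℝ, HasDerivAt (f ∘ A) (fderiv ℝ f (z + t • u) u) t := by
    intro t
    have h1 : HasDerivAt (fun s : ℝ => f (z + s • u)) (fderiv ℝ f (z + t • u) u) t :=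
      (((hf.differentiable (by norm_num)) (z + t • u)).hasFDerivAt).comp_hasDerivAt t (hcurve t)
    refine h1.congr_of_eventuallyEq ?_
    filter_upwards with s; simp [Function.comp, hAt]
  have hψ'mono : Monotone (fun t : ℝ => fderiv ℝ f (z + t • u) u) := by
    have h := hψconv.monotoneOn_deriv (fun x _ => (hψd x).differentiableAt)
    intro a b hab
    have := h (mem_univ a) (mem_univ b) hab
    rwa [(hψd a).deriv, (hψd b).deriv] at this
  have hψ'd : HasDerivAt (fun t : ℝ => fderiv ℝ f (z + t • u) u)
      (fderiv ℝ (fderiv ℝ f) z u u) 0 := by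
    have hD1 : HasFDerivAt (fun y => fderiv ℝ f y u)
        ((apply ℝ ℝ u).comp (fderiv ℝ (fderiv ℝ f) z)) z := by
      simpa [Function.comp_def] using
        (apply ℝ ℝ u).hasFDerivAt.comp z
          (((hf.fderiv_right (m := 2) (by norm_num)).differentiable (by norm_num) z).hasFDerivAt)
    rw [show z = z + (0:ℝ) • u by simp] at hD1
    have := hD1.comp_hasDerivAt 0 (hcurve 0)
    simpa [Function.comp_def] using this
  exact mono_hasDerivAt_nonneg hψ'mono hψ'd

private lemma upper_bound {R : ℝ} (hR : 0 < R) (hf : ContDiff ℝ 3 f)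
    (hconv : ConvexOn ℝ Set.univ f)
    (hsc : ∀ x u v, |iteratedFDeriv ℝ 3 f x ![u, u, v]| ≤
      R * (iteratedFDeriv ℝ 2 f x ![u, u]) * ‖v‖) (x y u : E) :
    fderiv ℝ (fderiv ℝ f) y u u ≤
      Real.exp (R * ‖y - x‖) * fderiv ℝ (fderiv ℝ f) x u u := by
  set v : E := y - x with hv
  set K : ℝ := R * ‖v‖ with hK
  set g : ℝ → ℝ := fun t => fderiv ℝ (fderiv ℝ f) (x + t • v) u u with hg
  have hgnn : ∀ t, 0 ≤ g t := fun t => hess_nonneg hf hconv _ u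
  have hcurve : ∀ t : ℝ, HasDerivAt (fun s : ℝ => x + s • v) v t := by
    intro t; simpa using ((hasDerivAt_id t).smul_const v).const_add x
  have hg' : ∀ t : ℝ, HasDerivAt g
      (fderiv ℝ (fderiv ℝ (fderiv ℝ f)) (x + t • v) v u u) t := by
    intro t
    have h := (hasFDerivAt_D2_apply hf (x + t • v) u u).comp_hasDerivAt t (hcurve t)
    simpa [Function.comp_def, hg] using h
  have hbound : ∀ t : ℝ,
      ‖fderiv ℝ (fderiv ℝ (fderiv ℝ f)) (x + t • v) v u u‖ ≤ K * ‖g t‖ + 0 := by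
    intro t
    have e1 : fderiv ℝ (fderiv ℝ (fderiv ℝ f)) (x + t • v) v u u
        = iteratedFDeriv ℝ 3 f (x + t • v) ![u, u, v] := by
      rw [D3_symm12 hf, D3_symm23 hf, iteratedFDeriv_three_apply']
    rw [e1, Real.norm_eq_abs]
    have := hsc (x + t • v) u v
    rw [iteratedFDeriv_two_apply'] at this
    rw [Real.norm_of_nonneg (hgnn t), add_zero, hK]
    calc |iteratedFDeriv ℝ 3 f (x + t • v) ![u, u, v]|
        ≤ R * fderiv ℝ (fderiv ℝ f) (x + t • v) u u * ‖v‖ := this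
      _ = R * ‖v‖ * g t := by rw [hg]; ring
  have key := norm_le_gronwallBound_of_norm_deriv_right_le (a := 0) (b := 1)
    (f := g) (f' := fun t => fderiv ℝ (fderiv ℝ (fderiv ℝ f)) (x + t • v) v u u)
    (δ := g 0) (K := K) (ε := 0)
    (fun t _ => (hg' t).continuousAt.continuousWithinAt)
    (fun t _ => (hg' t).hasDerivWithinAt.mono (fun s hs => trivial))
    (by rw [Real.norm_of_nonneg (hgnn 0)])
    (fun t _ => hbound t)
  have h1 := key 1 (by norm_num)
  rw [Real.norm_of_nonneg (hgnn 1), gronwallBound_ε0] at h1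
  have e0 : g 0 = fderiv ℝ (fderiv ℝ f) x u u := by simp [hg]
  have e1 : g 1 = fderiv ℝ (fderiv ℝ f) y u u := by
    have : x + (1:ℝ) • v = y := by rw [hv]; simp
    simp only [hg, this]
  rw [e0, e1] at h1
  calc fderiv ℝ (fderiv ℝ f) y u u
      ≤ fderiv ℝ (fderiv ℝ f) x u u * Real.exp (K * (1 - 0)) := h1
    _ = Real.exp (R * ‖y - x‖) * fderiv ℝ (fderiv ℝ f) x u u := by
        rw [hK, hv]; ring_nf

end Aux

/-- For a pseudo self-concordant function `f` with parameter `R`, the Hessian quadratic forms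
satisfy `e^{-R‖y-x‖} ∇²f(x)[u,u] ≤ ∇²f(y)[u,u] ≤ e^{R‖y-x‖} ∇²f(x)[u,u]` (Loewner order). -/
theorem stmt_5 {p : ℕ} (R : ℝ) (hR : 0 < R) (f : EuclideanSpace ℝ (Fin p) → ℝ)
    (hf : ContDiff ℝ 3 f) (hconv : ConvexOn ℝ Set.univ f)
    (hsc : ∀ x u v, |iteratedFDeriv ℝ 3 f x ![u, u, v]| ≤
      R * (iteratedFDeriv ℝ 2 f x ![u, u]) * ‖v‖) :
    ∀ x y u,
      Real.exp (-(R * ‖y - x‖)) * iteratedFDeriv ℝ 2 f x ![u, u] ≤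
        iteratedFDeriv ℝ 2 f y ![u, u] ∧
      iteratedFDeriv ℝ 2 f y ![u, u] ≤
        Real.exp (R * ‖y - x‖) * iteratedFDeriv ℝ 2 f x ![u, u] := by
  intro x y u
  rw [iteratedFDeriv_two_apply' f x u u, iteratedFDeriv_two_apply' f y u u]
  constructor
  · have h := upper_bound hR hf hconv hsc y x u
    rw [norm_sub_rev] at h
    have h2 := mul_le_mul_of_nonneg_left h (Real.exp_nonneg (-(R * ‖y - x‖)))
    calc Real.exp (-(R * ‖y - x‖)) * fderiv ℝ (fderiv ℝ f) x u u
        ≤ Real.exp (-(R * ‖y - x‖)) *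
            (Real.exp (R * ‖y - x‖) * fderiv ℝ (fderiv ℝ f) y u u) := h2
      _ = fderiv ℝ (fderiv ℝ f) y u u := by
          rw [← mul_assoc, ← Real.exp_add]; simp
  · exact upper_bound hR hf hconv hsc x y u
end

section
/- For a pseudo self-concordant function f with parameter R and any positive semidefinite J, the normalized Hessian is locally Lipschitz: for all x₁, x₂, x⋆ ∈ ℝ^p, ‖J^{1/2}(∇²f(x₂) − ∇²f(x₁))J^{1/2}‖₂ ≤ R · e^{R·max(‖x₁−x⋆‖₂, ‖x₂−x⋆‖₂)} · ‖J^{1/2}∇²f(x⋆)J^{1/2}‖₂ · ‖x₂−x₁‖₂. -/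
open Matrix

/-- Spectral (operator) norm of a real square matrix. -/
noncomputable def specNorm {p : ℕ} (A : Matrix (Fin p) (Fin p) ℝ) : ℝ :=
  ‖Matrix.toEuclideanCLM (𝕜 := ℝ) A‖

/-- Hessian matrix of `f : ℝ^p → ℝ` at `x`, in the standard basis. -/
noncomputable def hessMat {p : ℕ} (f : EuclideanSpace ℝ (Fin p) → ℝ)
    (x : EuclideanSpace ℝ (Fin p)) : Matrix (Fin p) (Fin p) ℝ :=
  Matrix.of fun i j =>
    iteratedFDeriv ℝ 2 f x ![EuclideanSpace.single i (1 : ℝ), EuclideanSpace.single j (1 : ℝ)]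

/-- The positive semidefinite square root of a positive semidefinite matrix
(definition removed from Mathlib; restated with its old meaning). -/
noncomputable def Matrix.PosSemidef.sqrt {n : Type*} [Fintype n] [DecidableEq n]
    {A : Matrix n n ℝ} (hA : A.PosSemidef) : Matrix n n ℝ :=
  hA.1.eigenvectorUnitary.1 * diagonal ((↑) ∘ (√·) ∘ hA.1.eigenvalues) *
  (star hA.1.eigenvectorUnitary : Matrix n n ℝ)

open RealInnerProductSpace

section Aux

variable {p : ℕ} {f : EuclideanSpace ℝ (Fin p) → ℝ} {R : ℝ}

lemma hess_symm (hf : ContDiff ℝ 3 f) (x u v : EuclideanSpace ℝ (Fin p)) :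
    iteratedFDeriv ℝ 2 f x ![u, v] = iteratedFDeriv ℝ 2 f x ![v, u] := by
  rw [iteratedFDeriv_two_apply, iteratedFDeriv_two_apply]
  simp only [Matrix.cons_val_zero, Matrix.cons_val_one, Matrix.head_cons]
  exact (hf.contDiffAt.isSymmSndFDerivAt (by norm_num)).eq u v

lemma third_eq (x : EuclideanSpace ℝ (Fin p)) (m : Fin 3 → EuclideanSpace ℝ (Fin p)) :
    iteratedFDeriv ℝ 3 f x m = fderiv ℝ (fderiv ℝ (fderiv ℝ f)) x (m 0) (m 1) (m 2) := by
  rw [iteratedFDeriv_succ_apply_right (n := 2), iteratedFDeriv_two_apply]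
  simp [Fin.init, Fin.last]

lemma third_symm12 (hf : ContDiff ℝ 3 f) (x a b c : EuclideanSpace ℝ (Fin p)) :
    iteratedFDeriv ℝ 3 f x ![a, b, c] = iteratedFDeriv ℝ 3 f x ![b, a, c] := by
  have hg : ContDiff ℝ 2 (fderiv ℝ f) := hf.fderiv_right (by norm_num)
  have hsymm := (hg.contDiffAt (x := x)).isSymmSndFDerivAt (by norm_num)
  rw [third_eq, third_eq]
  simp only [Matrix.cons_val_zero, Matrix.cons_val_one, Matrix.head_cons, Matrix.cons_val_two,
    Matrix.tail_cons]
  rw [hsymm.eq a b]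

lemma third_symm23 (hf : ContDiff ℝ 3 f) (x a b c : EuclideanSpace ℝ (Fin p)) :
    iteratedFDeriv ℝ 3 f x ![a, b, c] = iteratedFDeriv ℝ 3 f x ![a, c, b] := by
  rw [third_eq, third_eq]
  simp only [Matrix.cons_val_zero, Matrix.cons_val_one, Matrix.head_cons, Matrix.cons_val_two,
    Matrix.tail_cons]
  have hHdiff : Differentiable ℝ (fderiv ℝ (fderiv ℝ f)) :=
    ((hf.fderiv_right (m := 2) (by norm_num)).fderiv_right (m := 1) (by norm_num)).differentiable
      (by norm_num)
  have key : ∀ v w : EuclideanSpace ℝ (Fin p),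
      fderiv ℝ (fderiv ℝ (fderiv ℝ f)) x a v w =
      fderiv ℝ (fun y => fderiv ℝ (fderiv ℝ f) y v w) x a := by
    intro v w
    let T : (EuclideanSpace ℝ (Fin p) →L[ℝ] (EuclideanSpace ℝ (Fin p) →L[ℝ] ℝ)) →L[ℝ] ℝ :=
      (ContinuousLinearMap.apply ℝ ℝ w).comp
        (ContinuousLinearMap.apply ℝ (EuclideanSpace ℝ (Fin p) →L[ℝ] ℝ) v)
    have hcomp : fderiv ℝ (⇑T ∘ fderiv ℝ (fderiv ℝ f)) x =
        T.comp (fderiv ℝ (fderiv ℝ (fderiv ℝ f)) x) :=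
      (HasFDerivAt.comp (𝕜 := ℝ) (E := EuclideanSpace ℝ (Fin p)) (F := EuclideanSpace ℝ (Fin p) →L[ℝ] EuclideanSpace ℝ (Fin p) →L[ℝ] ℝ) (G := ℝ) x T.hasFDerivAt (hHdiff x).hasFDerivAt).fderiv
    calc fderiv ℝ (fderiv ℝ (fderiv ℝ f)) x a v w
        = (T.comp (fderiv ℝ (fderiv ℝ (fderiv ℝ f)) x)) a := rfl
      _ = fderiv ℝ (⇑T ∘ fderiv ℝ (fderiv ℝ f)) x a := by rw [hcomp]
      _ = fderiv ℝ (fun y => fderiv ℝ (fderiv ℝ f) y v w) x a := rfl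
  rw [key b c, key c b]
  have heq : (fun y => fderiv ℝ (fderiv ℝ f) y b c) = fun y => fderiv ℝ (fderiv ℝ f) y c b :=
    funext fun y => (hf.contDiffAt.isSymmSndFDerivAt (by norm_num)).eq b c
  rw [heq]

lemma hasDerivAt_Q (hf : ContDiff ℝ 3 f) (x d u : EuclideanSpace ℝ (Fin p)) (t : ℝ) :
    HasDerivAt (fun s : ℝ => iteratedFDeriv ℝ 2 f (x + s • d) ![u, u])
      (iteratedFDeriv ℝ 3 f (x + t • d) ![d, u, u]) t := by
  have hF : ContDiff ℝ 1 (iteratedFDeriv ℝ 2 f) := hf.iteratedFDeriv_right (by norm_num)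
  have hc : HasDerivAt (fun s : ℝ => x + s • d) d t := by
    simpa using ((hasDerivAt_id t).smul_const d).const_add x
  have h1 : HasDerivAt (fun s : ℝ => iteratedFDeriv ℝ 2 f (x + s • d))
      (fderiv ℝ (iteratedFDeriv ℝ 2 f) (x + t • d) d) t :=
    (hF.differentiable (by norm_num) _).hasFDerivAt.comp_hasDerivAt t hc
  have h2 := (ContinuousMultilinearMap.apply ℝ (fun _ : Fin 2 => EuclideanSpace ℝ (Fin p)) ℝ
      ![u, u]).hasFDerivAt.comp_hasDerivAt t h1
  convert h2 using 1 <;> rfl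

lemma Q_growth (hR : 0 ≤ R) (hf : ContDiff ℝ 3 f)
    (hsc : ∀ x u v, |iteratedFDeriv ℝ 3 f x ![u, u, v]| ≤
      R * (iteratedFDeriv ℝ 2 f x ![u, u]) * ‖v‖)
    (a b u : EuclideanSpace ℝ (Fin p)) :
    |iteratedFDeriv ℝ 2 f b ![u, u]| ≤
      |iteratedFDeriv ℝ 2 f a ![u, u]| * Real.exp (R * ‖b - a‖) := by
  set d := b - a with hd
  have key := norm_le_gronwallBound_of_norm_deriv_right_le
    (f := fun t : ℝ => iteratedFDeriv ℝ 2 f (a + t • d) ![u, u])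
    (f' := fun t : ℝ => iteratedFDeriv ℝ 3 f (a + t • d) ![d, u, u])
    (δ := ‖iteratedFDeriv ℝ 2 f (a + (0:ℝ) • d) ![u, u]‖) (K := R * ‖d‖) (ε := 0)
    (a := (0:ℝ)) (b := 1)
    (fun t _ => ((hasDerivAt_Q hf a d u t).continuousAt).continuousWithinAt)
    (fun t _ => (hasDerivAt_Q hf a d u t).hasDerivWithinAt)
    le_rfl
    ?_ 1 ⟨zero_le_one, le_rfl⟩
  · rw [gronwallBound_ε0] at key
    have e1 : a + (1:ℝ) • d = b := by rw [one_smul, hd]; abel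
    have e0 : a + (0:ℝ) • d = a := by rw [zero_smul, add_zero]
    simp only [e1, e0, Real.norm_eq_abs, sub_zero, mul_one] at key
    exact key
  · intro t _
    have h3 : iteratedFDeriv ℝ 3 f (a + t • d) ![d, u, u]
        = iteratedFDeriv ℝ 3 f (a + t • d) ![u, u, d] := by
      rw [third_symm12 hf, third_symm23 hf]
    show ‖iteratedFDeriv ℝ 3 f (a + t • d) ![d, u, u]‖ ≤
      R * ‖d‖ * ‖iteratedFDeriv ℝ 2 f (a + t • d) ![u, u]‖ + 0
    rw [Real.norm_eq_abs, Real.norm_eq_abs, h3, add_zero]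
    calc |iteratedFDeriv ℝ 3 f (a + t • d) ![u, u, d]|
        ≤ R * (iteratedFDeriv ℝ 2 f (a + t • d) ![u, u]) * ‖d‖ := hsc _ u d
      _ ≤ R * |iteratedFDeriv ℝ 2 f (a + t • d) ![u, u]| * ‖d‖ := by
          gcongr; exact le_abs_self _
      _ = R * ‖d‖ * |iteratedFDeriv ℝ 2 f (a + t • d) ![u, u]| := by ring

lemma Q_lip (hR : 0 ≤ R) (hf : ContDiff ℝ 3 f)
    (hsc : ∀ x u v, |iteratedFDeriv ℝ 3 f x ![u, u, v]| ≤
      R * (iteratedFDeriv ℝ 2 f x ![u, u]) * ‖v‖)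
    (x₁ x₂ xs u : EuclideanSpace ℝ (Fin p)) :
    |iteratedFDeriv ℝ 2 f x₂ ![u, u] - iteratedFDeriv ℝ 2 f x₁ ![u, u]| ≤
      R * Real.exp (R * max ‖x₁ - xs‖ ‖x₂ - xs‖) * |iteratedFDeriv ℝ 2 f xs ![u, u]| *
        ‖x₂ - x₁‖ := by
  set d := x₂ - x₁ with hd
  set M := max ‖x₁ - xs‖ ‖x₂ - xs‖ with hM
  set Qs := |iteratedFDeriv ℝ 2 f xs ![u, u]| with hQs
  have hψcont : Continuous (fun t : ℝ => iteratedFDeriv ℝ 3 f (x₁ + t • d) ![d, u, u]) := by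
    exact ((ContinuousMultilinearMap.apply ℝ (fun _ : Fin 3 => EuclideanSpace ℝ (Fin p)) ℝ
      ![d, u, u]).continuous).comp ((hf.continuous_iteratedFDeriv (by norm_num)).comp
      (continuous_const.add (continuous_id.smul continuous_const)))
  have hint : IntervalIntegrable (fun t : ℝ => iteratedFDeriv ℝ 3 f (x₁ + t • d) ![d, u, u])
      MeasureTheory.volume 0 1 := hψcont.intervalIntegrable 0 1
  have ftc : ∫ t in (0:ℝ)..1, iteratedFDeriv ℝ 3 f (x₁ + t • d) ![d, u, u]
      = iteratedFDeriv ℝ 2 f (x₁ + (1:ℝ) • d) ![u, u]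
        - iteratedFDeriv ℝ 2 f (x₁ + (0:ℝ) • d) ![u, u] :=
    intervalIntegral.integral_eq_sub_of_hasDerivAt (fun t _ => hasDerivAt_Q hf x₁ d u t) hint
  have e1 : x₁ + (1:ℝ) • d = x₂ := by rw [one_smul, hd]; abel
  have e0 : x₁ + (0:ℝ) • d = x₁ := by rw [zero_smul, add_zero]
  rw [e1, e0] at ftc
  have hbound : ∀ t ∈ Set.uIoc (0:ℝ) 1,
      ‖iteratedFDeriv ℝ 3 f (x₁ + t • d) ![d, u, u]‖ ≤ R * Real.exp (R * M) * Qs * ‖d‖ := by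
    intro t ht
    rw [Set.uIoc_of_le zero_le_one] at ht
    have ht0 : 0 ≤ t := le_of_lt ht.1
    have ht1 : t ≤ 1 := ht.2
    have hyM : ‖x₁ + t • d - xs‖ ≤ M := by
      have hy : x₁ + t • d - xs = (1 - t) • (x₁ - xs) + t • (x₂ - xs) := by
        rw [hd]; module
      rw [hy]
      calc ‖(1 - t) • (x₁ - xs) + t • (x₂ - xs)‖
          ≤ ‖(1 - t) • (x₁ - xs)‖ + ‖t • (x₂ - xs)‖ := norm_add_le _ _
        _ = (1 - t) * ‖x₁ - xs‖ + t * ‖x₂ - xs‖ := by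
            rw [norm_smul, norm_smul, Real.norm_eq_abs, Real.norm_eq_abs,
              abs_of_nonneg (by linarith), abs_of_nonneg ht0]
        _ ≤ (1 - t) * M + t * M := by
            gcongr
            · exact le_max_left _ _
            · exact le_max_right _ _
        _ = M := by ring
    have h3 : iteratedFDeriv ℝ 3 f (x₁ + t • d) ![d, u, u]
        = iteratedFDeriv ℝ 3 f (x₁ + t • d) ![u, u, d] := by
      rw [third_symm12 hf, third_symm23 hf]
    rw [Real.norm_eq_abs, h3]
    calc |iteratedFDeriv ℝ 3 f (x₁ + t • d) ![u, u, d]|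
        ≤ R * (iteratedFDeriv ℝ 2 f (x₁ + t • d) ![u, u]) * ‖d‖ := hsc _ u d
      _ ≤ R * |iteratedFDeriv ℝ 2 f (x₁ + t • d) ![u, u]| * ‖d‖ := by
          gcongr; exact le_abs_self _
      _ ≤ R * (Qs * Real.exp (R * ‖x₁ + t • d - xs‖)) * ‖d‖ := by
          gcongr
          exact Q_growth hR hf hsc xs _ u
      _ ≤ R * (Qs * Real.exp (R * M)) * ‖d‖ := by
          gcongr
      _ = R * Real.exp (R * M) * Qs * ‖d‖ := by ring
  have hfin := intervalIntegral.norm_integral_le_of_norm_le_const hbound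
  rw [ftc] at hfin
  simpa [Real.norm_eq_abs] using hfin

lemma inner_hess (x v w : EuclideanSpace ℝ (Fin p)) :
    ⟪v, Matrix.toEuclideanCLM (𝕜 := ℝ) (hessMat f x) w⟫ = iteratedFDeriv ℝ 2 f x ![v, w] := by
  have hij : ∀ i j, hessMat f x i j =
      fderiv ℝ (fderiv ℝ f) x (EuclideanSpace.single i (1:ℝ)) (EuclideanSpace.single j (1:ℝ)) := by
    intro i j
    show iteratedFDeriv ℝ 2 f x ![_, _] = _
    rw [iteratedFDeriv_two_apply]
    simp only [Matrix.cons_val_zero, Matrix.cons_val_one, Matrix.head_cons]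
  rw [iteratedFDeriv_two_apply]
  simp only [Matrix.cons_val_zero, Matrix.cons_val_one, Matrix.head_cons]
  have hcoord : ∀ i, (Matrix.toEuclideanCLM (𝕜 := ℝ) (hessMat f x) w) i
      = ∑ j, hessMat f x i j * w j := fun i => by
    show (Matrix.toEuclideanLin (hessMat f x) w) i = _
    rw [Matrix.toEuclideanLin_apply]
    simp [Matrix.mulVec, dotProduct]
  have hL : ⟪v, Matrix.toEuclideanCLM (𝕜 := ℝ) (hessMat f x) w⟫
      = ∑ i, ∑ j, v i * (w j *
        fderiv ℝ (fderiv ℝ f) x (EuclideanSpace.single i (1:ℝ)) (EuclideanSpace.single j (1:ℝ))) := by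
    rw [show ⟪v, Matrix.toEuclideanCLM (𝕜 := ℝ) (hessMat f x) w⟫
        = ∑ i, v i * (Matrix.toEuclideanCLM (𝕜 := ℝ) (hessMat f x) w) i by
      simp [PiLp.inner_apply, RCLike.inner_apply, mul_comm]]
    refine Finset.sum_congr rfl fun i _ => ?_
    rw [hcoord i, Finset.mul_sum]
    refine Finset.sum_congr rfl fun j _ => ?_
    rw [hij i j]
    ring
  rw [hL]
  have hv : ∑ i, v i • EuclideanSpace.single i (1:ℝ) = v := by
    have := (EuclideanSpace.basisFun (Fin p) ℝ).sum_repr v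
    simpa [EuclideanSpace.basisFun_apply, EuclideanSpace.basisFun_repr] using this
  have hw : ∑ j, w j • EuclideanSpace.single j (1:ℝ) = w := by
    have := (EuclideanSpace.basisFun (Fin p) ℝ).sum_repr w
    simpa [EuclideanSpace.basisFun_apply, EuclideanSpace.basisFun_repr] using this
  conv_rhs => rw [← hv, ← hw]
  simp only [map_sum, _root_.map_smul, ContinuousLinearMap.sum_apply,
    ContinuousLinearMap.smul_apply, smul_eq_mul, Finset.mul_sum]
  rw [Finset.sum_comm]
  refine Finset.sum_congr rfl fun i _ => Finset.sum_congr rfl fun j _ => by ring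

lemma opnorm_le_of_quadform {T : EuclideanSpace ℝ (Fin p) →L[ℝ] EuclideanSpace ℝ (Fin p)}
    (hsym : ∀ x y, ⟪T x, y⟫ = ⟪x, T y⟫) {C : ℝ} (hC : 0 ≤ C)
    (h : ∀ x, |⟪x, T x⟫| ≤ C * ‖x‖ ^ 2) : ‖T‖ ≤ C := by
  have pol : ∀ x y : EuclideanSpace ℝ (Fin p),
      4 * ⟪T x, y⟫ = ⟪x + y, T (x + y)⟫ - ⟪x - y, T (x - y)⟫ := by
    intro x y
    have e1 : ⟪x + y, T (x + y)⟫ = ⟪x, T x⟫ + ⟪x, T y⟫ + ⟪y, T x⟫ + ⟪y, T y⟫ := by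
      rw [map_add, inner_add_left, inner_add_right, inner_add_right]; ring
    have e2 : ⟪x - y, T (x - y)⟫ = ⟪x, T x⟫ - ⟪x, T y⟫ - ⟪y, T x⟫ + ⟪y, T y⟫ := by
      rw [map_sub, inner_sub_left, inner_sub_right, inner_sub_right]; ring
    rw [e1, e2, ← hsym x y, real_inner_comm y (T x)]
    ring
  have hb : ∀ x y : EuclideanSpace ℝ (Fin p), |⟪T x, y⟫| ≤ C * ‖x‖ * ‖y‖ := by
    have hunit : ∀ x y : EuclideanSpace ℝ (Fin p), ‖x‖ = 1 → ‖y‖ = 1 → |⟪T x, y⟫| ≤ C := by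
      intro x y hx hy
      have h4 : |4 * ⟪T x, y⟫| ≤ C * ‖x + y‖ ^ 2 + C * ‖x - y‖ ^ 2 := by
        rw [pol x y]
        exact (abs_sub _ _).trans (add_le_add (h _) (h _))
      have hpar : ‖x + y‖ ^ 2 + ‖x - y‖ ^ 2 = 2 * (‖x‖ ^ 2 + ‖y‖ ^ 2) := by
        have := parallelogram_law_with_norm ℝ x y
        nlinarith [this]
      have habs : |4 * ⟪T x, y⟫| ≤ 4 * C := by
        calc |4 * ⟪T x, y⟫| ≤ C * ‖x + y‖ ^ 2 + C * ‖x - y‖ ^ 2 := h4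
          _ = C * (‖x + y‖ ^ 2 + ‖x - y‖ ^ 2) := by ring
          _ = 4 * C := by rw [hpar, hx, hy]; ring
      rw [abs_mul] at habs
      simp only [abs_of_nonneg (by norm_num : (0:ℝ) ≤ 4)] at habs
      linarith
    intro x y
    rcases eq_or_ne x 0 with rfl | hx
    · simp
    rcases eq_or_ne y 0 with rfl | hy
    · simp
    have hnx : (0:ℝ) < ‖x‖ := norm_pos_iff.mpr hx
    have hny : (0:ℝ) < ‖y‖ := norm_pos_iff.mpr hy
    have key := hunit (‖x‖⁻¹ • x) (‖y‖⁻¹ • y)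
      (by rw [norm_smul, Real.norm_eq_abs, abs_of_nonneg (by positivity)]; field_simp)
      (by rw [norm_smul, Real.norm_eq_abs, abs_of_nonneg (by positivity)]; field_simp)
    rw [_root_.map_smul, inner_smul_left, inner_smul_right] at key
    simp only [RCLike.star_def, starRingEnd_apply, star_trivial] at key
    rw [abs_mul, abs_mul, abs_of_nonneg (by positivity : (0:ℝ) ≤ ‖x‖⁻¹),
      abs_of_nonneg (by positivity : (0:ℝ) ≤ ‖y‖⁻¹)] at key
    calc |⟪T x, y⟫| = ‖x‖ * ‖y‖ * (‖x‖⁻¹ * (‖y‖⁻¹ * |⟪T x, y⟫|)) := by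
          field_simp
      _ ≤ ‖x‖ * ‖y‖ * C := by
          have hxy : (0:ℝ) ≤ ‖x‖ * ‖y‖ := by positivity
          exact mul_le_mul_of_nonneg_left key hxy
      _ = C * ‖x‖ * ‖y‖ := by ring
  refine ContinuousLinearMap.opNorm_le_bound T hC fun x => ?_
  rcases eq_or_ne (T x) 0 with h0 | h0
  · rw [h0]; simp; positivity
  have hpos : (0:ℝ) < ‖T x‖ := norm_pos_iff.mpr h0
  have hmul : ‖T x‖ * ‖T x‖ ≤ C * ‖x‖ * ‖T x‖ := by
    have h2 := hb x (T x)
    rwa [real_inner_self_eq_norm_mul_norm, abs_of_nonneg (by positivity)] at h2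
  exact le_of_mul_le_mul_right hmul hpos

end Aux

/-- Local Lipschitzness of the normalized Hessian of a pseudo self-concordant function. -/
theorem stmt_6 {p : ℕ} (R : ℝ) (hR : 0 < R) (f : EuclideanSpace ℝ (Fin p) → ℝ)
    (hf : ContDiff ℝ 3 f)
    (hsc : ∀ x u v, |iteratedFDeriv ℝ 3 f x ![u, u, v]| ≤
      R * (iteratedFDeriv ℝ 2 f x ![u, u]) * ‖v‖)
    (J : Matrix (Fin p) (Fin p) ℝ) (hJ : J.PosSemidef) :
    ∀ x₁ x₂ xs : EuclideanSpace ℝ (Fin p),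
      specNorm (hJ.sqrt * (hessMat f x₂ - hessMat f x₁) * hJ.sqrt) ≤
        R * Real.exp (R * max ‖x₁ - xs‖ ‖x₂ - xs‖) *
          specNorm (hJ.sqrt * hessMat f xs * hJ.sqrt) * ‖x₂ - x₁‖ := by
  intro x₁ x₂ xs
  have hR0 : 0 ≤ R := le_of_lt hR
  have hSherm : (hJ.sqrt).IsHermitian := by
    unfold Matrix.PosSemidef.sqrt
    rw [star_eq_conjTranspose]
    exact isHermitian_mul_mul_conjTranspose _ (isHermitian_diagonal _)
  have hHherm : ∀ x, (hessMat f x).IsHermitian := by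
    intro x
    ext i j
    show star (hessMat f x j i) = hessMat f x i j
    rw [star_trivial]
    exact hess_symm hf x _ _
  have symmOf : ∀ (A : Matrix (Fin p) (Fin p) ℝ), A.IsHermitian →
      ∀ v w : EuclideanSpace ℝ (Fin p),
        ⟪Matrix.toEuclideanCLM (𝕜 := ℝ) A v, w⟫ = ⟪v, Matrix.toEuclideanCLM (𝕜 := ℝ) A w⟫ := by
    intro A hA v w
    exact (Matrix.isHermitian_iff_isSymmetric.mp hA) v w
  have hMherm : (hJ.sqrt * (hessMat f x₂ - hessMat f x₁) * hJ.sqrt).IsHermitian := by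
    have hD : (hessMat f x₂ - hessMat f x₁).IsHermitian := (hHherm x₂).sub (hHherm x₁)
    show _ = _
    rw [conjTranspose_mul, conjTranspose_mul, hSherm.eq, hD.eq, Matrix.mul_assoc]
  have hSherm2 : (hJ.sqrt * hessMat f xs * hJ.sqrt).IsHermitian := by
    show _ = _
    rw [conjTranspose_mul, conjTranspose_mul, hSherm.eq, (hHherm xs).eq, Matrix.mul_assoc]
  show ‖Matrix.toEuclideanCLM (𝕜 := ℝ) (hJ.sqrt * (hessMat f x₂ - hessMat f x₁) * hJ.sqrt)‖ ≤ _
  have hC0 : 0 ≤ R * Real.exp (R * max ‖x₁ - xs‖ ‖x₂ - xs‖) *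
      specNorm (hJ.sqrt * hessMat f xs * hJ.sqrt) * ‖x₂ - x₁‖ := by
    have : (0:ℝ) ≤ specNorm (hJ.sqrt * hessMat f xs * hJ.sqrt) := norm_nonneg _
    positivity
  refine opnorm_le_of_quadform (symmOf _ hMherm) hC0 fun u => ?_
  set w : EuclideanSpace ℝ (Fin p) := Matrix.toEuclideanCLM (𝕜 := ℝ) hJ.sqrt u with hwdef
  have key : ⟪u, Matrix.toEuclideanCLM (𝕜 := ℝ)
        (hJ.sqrt * (hessMat f x₂ - hessMat f x₁) * hJ.sqrt) u⟫
      = iteratedFDeriv ℝ 2 f x₂ ![w, w] - iteratedFDeriv ℝ 2 f x₁ ![w, w] := by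
    rw [_root_.map_mul, _root_.map_mul, ContinuousLinearMap.mul_apply, ContinuousLinearMap.mul_apply,
      ← symmOf _ hSherm u _, map_sub]
    rw [ContinuousLinearMap.sub_apply, inner_sub_right, inner_hess, inner_hess]
  have keys : ⟪u, Matrix.toEuclideanCLM (𝕜 := ℝ) (hJ.sqrt * hessMat f xs * hJ.sqrt) u⟫
      = iteratedFDeriv ℝ 2 f xs ![w, w] := by
    rw [_root_.map_mul, _root_.map_mul, ContinuousLinearMap.mul_apply, ContinuousLinearMap.mul_apply,
      ← symmOf _ hSherm u _, inner_hess]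
  have hQs : |iteratedFDeriv ℝ 2 f xs ![w, w]| ≤
      specNorm (hJ.sqrt * hessMat f xs * hJ.sqrt) * ‖u‖ ^ 2 := by
    rw [← keys]
    calc |⟪u, Matrix.toEuclideanCLM (𝕜 := ℝ) (hJ.sqrt * hessMat f xs * hJ.sqrt) u⟫|
        ≤ ‖u‖ * ‖Matrix.toEuclideanCLM (𝕜 := ℝ) (hJ.sqrt * hessMat f xs * hJ.sqrt) u‖ :=
          abs_real_inner_le_norm _ _
      _ ≤ ‖u‖ * (‖Matrix.toEuclideanCLM (𝕜 := ℝ) (hJ.sqrt * hessMat f xs * hJ.sqrt)‖ * ‖u‖) := by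
          gcongr
          exact ContinuousLinearMap.le_opNorm _ _
      _ = specNorm (hJ.sqrt * hessMat f xs * hJ.sqrt) * ‖u‖ ^ 2 := by
          rw [specNorm]; ring
  rw [key]
  calc |iteratedFDeriv ℝ 2 f x₂ ![w, w] - iteratedFDeriv ℝ 2 f x₁ ![w, w]|
      ≤ R * Real.exp (R * max ‖x₁ - xs‖ ‖x₂ - xs‖) * |iteratedFDeriv ℝ 2 f xs ![w, w]| *
        ‖x₂ - x₁‖ := Q_lip hR0 hf hsc x₁ x₂ xs w
    _ ≤ R * Real.exp (R * max ‖x₁ - xs‖ ‖x₂ - xs‖) *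
        (specNorm (hJ.sqrt * hessMat f xs * hJ.sqrt) * ‖u‖ ^ 2) * ‖x₂ - x₁‖ := by
        gcongr
    _ = R * Real.exp (R * max ‖x₁ - xs‖ ‖x₂ - xs‖) *
        specNorm (hJ.sqrt * hessMat f xs * hJ.sqrt) * ‖x₂ - x₁‖ * ‖u‖ ^ 2 := by ring
end

section
/- The binary logistic loss ℓ(θ) = log(1 + exp(−y·θᵀx)) with ‖x‖₂ ≤ M and y ∈ {±1} is pseudo self-concordant with parameter R = M: |D³ℓ(θ)[u,u,v]| ≤ M ‖v‖₂ · uᵀ∇²ℓ(θ)u for all θ, u, v. -/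
open Real

section aux

variable (y : ℝ)

noncomputable def gfun : ℝ → ℝ := fun t => Real.log (1 + Real.exp (-(y * t)))
noncomputable def qfun : ℝ → ℝ := fun t => Real.exp (-(y * t)) / (1 + Real.exp (-(y * t)))

lemma one_add_exp_pos (t : ℝ) : 0 < 1 + Real.exp (-(y * t)) := by positivity

lemma qfun_pos (t : ℝ) : 0 < qfun y t := by
  unfold qfun; positivity

lemma qfun_lt_one (t : ℝ) : qfun y t < 1 := by
  unfold qfun
  rw [div_lt_one (one_add_exp_pos y t)]
  linarith

lemma hasDerivAt_E (t : ℝ) :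
    HasDerivAt (fun s => Real.exp (-(y * s))) (-y * Real.exp (-(y * t))) t := by
  have h1 : HasDerivAt (fun s : ℝ => -(y * s)) (-y) t := by
    simpa [Pi.neg_def] using ((hasDerivAt_id t).const_mul y).neg
  simpa [mul_comm, Function.comp_def] using (Real.hasDerivAt_exp (-(y * t))).comp t h1

lemma hasDerivAt_gfun (t : ℝ) :
    HasDerivAt (gfun y) (-(y * qfun y t)) t := by
  have hE := hasDerivAt_E y t
  have h1 : HasDerivAt (fun s => 1 + Real.exp (-(y * s))) (-y * Real.exp (-(y * t))) t :=
    (hE.const_add 1)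
  have := (h1.log (ne_of_gt (one_add_exp_pos y t)))
  unfold gfun qfun
  convert this using 1
  field_simp

lemma hasDerivAt_qfun (t : ℝ) :
    HasDerivAt (qfun y) (-y * (qfun y t * (1 - qfun y t))) t := by
  have hE := hasDerivAt_E y t
  have h1 : HasDerivAt (fun s => 1 + Real.exp (-(y * s))) (-y * Real.exp (-(y * t))) t :=
    (hE.const_add 1)
  have := hE.div h1 (ne_of_gt (one_add_exp_pos y t))
  unfold qfun
  have h0 := one_add_exp_pos y t
  refine this.congr_deriv ?_
  field_simp
  ring

lemma contDiff_gfun : ContDiff ℝ ⊤ (gfun y) := by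
  have h1 : ContDiff ℝ ⊤ (fun t : ℝ => 1 + Real.exp (-(y * t))) :=
    contDiff_const.add (Real.contDiff_exp.comp ((contDiff_const.mul contDiff_id).neg))
  exact h1.log (fun t => ne_of_gt (one_add_exp_pos y t))

lemma iteratedDeriv_two (t : ℝ) (hy : y = 1 ∨ y = -1) :
    iteratedDeriv 2 (gfun y) t = qfun y t * (1 - qfun y t) := by
  have hd1 : deriv (gfun y) = fun s => -(y * qfun y s) := by
    funext s; exact (hasDerivAt_gfun y s).deriv
  rw [show (2:ℕ) = 1 + 1 from rfl, iteratedDeriv_succ, iteratedDeriv_one, hd1]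
  have : HasDerivAt (fun s => -(y * qfun y s))
      (-(y * (-y * (qfun y t * (1 - qfun y t))))) t :=
    ((hasDerivAt_qfun y t).const_mul y).neg
  rw [this.deriv]
  have hy2 : y * y = 1 := by rcases hy with h | h <;> rw [h] <;> norm_num
  linear_combination (qfun y t * (1 - qfun y t)) * hy2

lemma iteratedDeriv_three (t : ℝ) (hy : y = 1 ∨ y = -1) :
    iteratedDeriv 3 (gfun y) t =
      -y * (qfun y t * (1 - qfun y t)) * (1 - 2 * qfun y t) := by
  have h2 : iteratedDeriv 2 (gfun y) = fun s => qfun y s * (1 - qfun y s) := by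
    funext s; exact iteratedDeriv_two y s hy
  rw [show (3:ℕ) = 2 + 1 from rfl, iteratedDeriv_succ, h2]
  have hq := hasDerivAt_qfun y t
  have h : HasDerivAt (fun s => qfun y s * (1 - qfun y s))
      (-y * (qfun y t * (1 - qfun y t)) * (1 - 2 * qfun y t)) t := by
    have := hq.mul ((hasDerivAt_const t (1:ℝ)).sub hq)
    exact this.congr_deriv (by simp only [Pi.sub_apply]; ring)
  rw [h.deriv]

end aux

set_option maxHeartbeats 1000000 in
/-- The binary logistic loss `ℓ(θ) = log(1 + exp(-y θᵀx))` with `‖x‖ ≤ M` and `y ∈ {±1}`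
is pseudo self-concordant with parameter `R = M`. -/
theorem stmt_8 {p : ℕ} (x : EuclideanSpace ℝ (Fin p)) (M : ℝ) (hx : ‖x‖ ≤ M)
    (y : ℝ) (hy : y = 1 ∨ y = -1) :
    ∀ (θ u v : EuclideanSpace ℝ (Fin p)),
      |iteratedFDeriv ℝ 3
          (fun θ => Real.log (1 + Real.exp (-(y * (inner ℝ θ x : ℝ))))) θ ![u, u, v]| ≤
        M * ‖v‖ *
          (iteratedFDeriv ℝ 2
            (fun θ => Real.log (1 + Real.exp (-(y * (inner ℝ θ x : ℝ))))) θ ![u, u]) := by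
  intro θ u v
  set L : EuclideanSpace ℝ (Fin p) →L[ℝ] ℝ := innerSL ℝ x with hL
  have hfun : (fun θ : EuclideanSpace ℝ (Fin p) =>
      Real.log (1 + Real.exp (-(y * (inner ℝ θ x : ℝ))))) = gfun y ∘ L := by
    funext w
    simp only [Function.comp_apply, hL, innerSL_apply_apply, gfun]
    rw [real_inner_comm]
  have hcomp3 := L.iteratedFDeriv_comp_right (f := gfun y) (contDiff_gfun y) θ
    (i := 3) le_top
  have hcomp2 := L.iteratedFDeriv_comp_right (f := gfun y) (contDiff_gfun y) θ
    (i := 2) le_top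
  rw [hfun, hcomp3, hcomp2,
    ContinuousMultilinearMap.compContinuousLinearMap_apply,
    ContinuousMultilinearMap.compContinuousLinearMap_apply]
  -- turn the multilinear application into iteratedDeriv times products
  set s := L θ with hs
  set a := L u with ha
  set b := L v with hb
  have e3 : (fun i => L (![u, u, v] i)) = fun i => (![a, a, b] i) • (1 : ℝ) := by
    funext i
    fin_cases i <;> simp [ha, hb]
  have e2 : (fun i => L (![u, u] i)) = fun i => (![a, a] i) • (1 : ℝ) := by
    funext i
    fin_cases i <;> simp [ha]
  rw [e3, e2, ContinuousMultilinearMap.map_smul_univ, ContinuousMultilinearMap.map_smul_univ,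
    ← iteratedDeriv_eq_iteratedFDeriv, ← iteratedDeriv_eq_iteratedFDeriv,
    iteratedDeriv_two y s hy, iteratedDeriv_three y s hy]
  have hprod3 : (∏ i, ![a, a, b] i) = a * a * b := by
    simp [Fin.prod_univ_three]
  have hprod2 : (∏ i, ![a, a] i) = a * a := by
    simp [Fin.prod_univ_two]
  rw [hprod3, hprod2]
  set q := qfun y s with hqdef
  have hq0 : 0 < q := qfun_pos y s
  have hq1 : q < 1 := qfun_lt_one y s
  have hQ : 0 ≤ q * (1 - q) := by nlinarith
  have hyabs : |y| = 1 := by rcases hy with h | h <;> rw [h] <;> norm_num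
  have hbabs : |b| ≤ M * ‖v‖ := by
    have := abs_real_inner_le_norm x v
    calc |b| = |(inner ℝ x v : ℝ)| := rfl
      _ ≤ ‖x‖ * ‖v‖ := this
      _ ≤ M * ‖v‖ := by
          apply mul_le_mul_of_nonneg_right hx (norm_nonneg v)
  have h12 : |1 - 2 * q| ≤ 1 := by
    rw [abs_le]; constructor <;> nlinarith
  have key : |a * a * b * (-y * (q * (1 - q)) * (1 - 2 * q))|
      ≤ M * ‖v‖ * (a * a * (q * (1 - q))) := by
    have : |a * a * b * (-y * (q * (1 - q)) * (1 - 2 * q))|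
        = (a * a) * (q * (1 - q)) * (|b| * |1 - 2 * q|) := by
      rw [abs_mul, abs_mul, abs_mul, abs_mul, abs_mul, abs_neg, hyabs,
        abs_of_nonneg hQ, abs_mul_abs_self]
      ring
    rw [this]
    have h1 : |b| * |1 - 2 * q| ≤ M * ‖v‖ * 1 := by
      apply mul_le_mul hbabs h12 (abs_nonneg _)
      have : (0:ℝ) ≤ ‖v‖ := norm_nonneg v
      nlinarith [abs_nonneg b, hbabs]
    calc (a * a) * (q * (1 - q)) * (|b| * |1 - 2 * q|)
        ≤ (a * a) * (q * (1 - q)) * (M * ‖v‖ * 1) := by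
          exact mul_le_mul_of_nonneg_left h1 (mul_nonneg (mul_self_nonneg a) hQ)
      _ = M * ‖v‖ * (a * a * (q * (1 - q))) := by ring
  simpa [smul_eq_mul] using key
end

section
/- For a continuous knapsack-type polytope, the linear maximum over the discrete set equals the maximum over its convex hull: with W_α = {w ∈ Δ^{n−1} : exactly αn coordinates of w are zero and the remaining (1−α)n coordinates equal 1/((1−α)n)} and αn an integer, the convex hull of W_α equals {w ∈ Δ^{n−1} : w_i ≤ 1/((1−α)n) for all i}, and max_{w∈W_α} ⟨w,v⟩ = max over this convex hull, for every v ∈ ℝ^n. -/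
open Finset

private lemma s9_move (n m : ℕ) (w : Fin n → ℝ)
    (hw0 : ∀ i, 0 ≤ w i) (hw1 : ∑ i, w i = 1) (hw2 : ∀ i, w i ≤ ((m:ℝ))⁻¹)
    (i j : Fin n) (hij : i ≠ j) (ε : ℝ) (hε0 : 0 ≤ ε)
    (hεi : ε ≤ (m:ℝ)⁻¹ - w i) (hεj : ε ≤ w j) :
    (∀ l, 0 ≤ w l + ε * ((if l = i then (1:ℝ) else 0) - (if l = j then 1 else 0))) ∧
    (∑ l, (w l + ε * ((if l = i then (1:ℝ) else 0) - (if l = j then 1 else 0)))) = 1 ∧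
    (∀ l, w l + ε * ((if l = i then (1:ℝ) else 0) - (if l = j then 1 else 0)) ≤ (m:ℝ)⁻¹) := by
  have hji : j ≠ i := hij.symm
  refine ⟨?_, ?_, ?_⟩
  · intro l
    by_cases hl : l = i
    · subst hl; simp [hij]; linarith [hw0 l]
    · by_cases hl' : l = j
      · subst hl'; simp [hji, hl]; linarith [hw0 l]
      · simp [hl, hl']; exact hw0 l
  · rw [Finset.sum_add_distrib, ← Finset.mul_sum, Finset.sum_sub_distrib]
    simp [hw1]
  · intro l
    by_cases hl : l = i
    · subst hl; simp [hij]; linarith [hw2 l]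
    · by_cases hl' : l = j
      · subst hl'; simp [hji, hl]; linarith [hw2 l, hε0]
      · simp [hl, hl']; exact hw2 l

private lemma s9_main (n m : ℕ) (hm : 0 < m) (d : ℕ) :
    ∀ w : Fin n → ℝ, (∀ i, 0 ≤ w i) → ∑ i, w i = 1 → (∀ i, w i ≤ (m:ℝ)⁻¹) →
    (Finset.univ.filter (fun i => w i ≠ 0 ∧ w i ≠ (m:ℝ)⁻¹)).card ≤ d →
    w ∈ convexHull ℝ {w : Fin n → ℝ | ∃ S : Finset (Fin n), S.card = m ∧
        w = fun i => if i ∈ S then ((m:ℝ))⁻¹ else 0} := by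
  have hm0 : (0:ℝ) < (m:ℝ) := by exact_mod_cast hm
  have hc0 : (0:ℝ) < (m:ℝ)⁻¹ := by positivity
  induction d with
  | zero =>
    intro w hw0 hw1 hw2 hcard
    have hfe : ∀ i, w i = 0 ∨ w i = (m:ℝ)⁻¹ := by
      intro i
      by_contra h
      push_neg at h
      have hi : i ∈ Finset.univ.filter (fun i => w i ≠ 0 ∧ w i ≠ (m:ℝ)⁻¹) := by
        simp [h.1, h.2]
      have := Finset.card_pos.mpr ⟨i, hi⟩
      omega
    apply subset_convexHull
    refine ⟨Finset.univ.filter (fun i => w i ≠ 0), ?_, ?_⟩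
    · have hsum : ∑ i, w i =
          ((Finset.univ.filter (fun i => w i ≠ 0)).card : ℝ) * (m:ℝ)⁻¹ := by
        rw [← Finset.sum_filter_ne_zero Finset.univ]
        rw [Finset.sum_congr rfl (fun i hi => ?_), Finset.sum_const, nsmul_eq_mul]
        rcases hfe i with h | h
        · exact absurd h (Finset.mem_filter.mp hi).2
        · exact h
      rw [hw1] at hsum
      field_simp at hsum
      exact_mod_cast hsum.symm
    · funext i
      by_cases h : w i = 0
      · simp [h, Finset.mem_filter]
      · rcases hfe i with h' | h'
        · exact absurd h' h
        · simp [h, h', Finset.mem_filter, hm.ne']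
  | succ d ih =>
    intro w hw0 hw1 hw2 hcard
    by_cases hle : (Finset.univ.filter (fun i => w i ≠ 0 ∧ w i ≠ (m:ℝ)⁻¹)).card ≤ d
    · exact ih w hw0 hw1 hw2 hle
    push_neg at hle
    have hne : (Finset.univ.filter (fun i => w i ≠ 0 ∧ w i ≠ (m:ℝ)⁻¹)).Nonempty :=
      Finset.card_pos.mp (by omega)
    obtain ⟨i, hi⟩ := hne
    have hi' := Finset.mem_filter.mp hi
    have hi0 : 0 < w i := lt_of_le_of_ne (hw0 i) (Ne.symm hi'.2.1)
    have hic : w i < (m:ℝ)⁻¹ := lt_of_le_of_ne (hw2 i) hi'.2.2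
    -- find a second fractional coordinate
    have hexj : ∃ j, j ≠ i ∧ w j ≠ 0 ∧ w j ≠ (m:ℝ)⁻¹ := by
      by_contra h
      push_neg at h
      set T := (Finset.univ.erase i).filter (fun j => w j ≠ 0) with hT
      have hsum : ∑ j ∈ Finset.univ.erase i, w j = (T.card : ℝ) * (m:ℝ)⁻¹ := by
        rw [← Finset.sum_filter_ne_zero (Finset.univ.erase i)]
        rw [Finset.sum_congr rfl (fun j hj => ?_), Finset.sum_const, nsmul_eq_mul]
        have hj' := Finset.mem_filter.mp hj
        exact h j (Finset.ne_of_mem_erase hj'.1) hj'.2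
      have htot : w i + ∑ j ∈ Finset.univ.erase i, w j = 1 := by
        rw [← hw1]
        exact (Finset.add_sum_erase Finset.univ w (Finset.mem_univ i)).symm ▸ rfl
      have hwi : w i = 1 - (T.card : ℝ) * (m:ℝ)⁻¹ := by
        rw [hsum] at htot; linarith
      have h1 : (T.card : ℝ) * (m:ℝ)⁻¹ < 1 := by linarith
      have h2 : 1 - (T.card : ℝ) * (m:ℝ)⁻¹ < (m:ℝ)⁻¹ := by linarith [hwi ▸ hic]
      have ht1 : (T.card : ℝ) < (m:ℝ) := by
        nlinarith [mul_lt_mul_of_pos_right h1 hm0, inv_mul_cancel₀ (ne_of_gt hm0)]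
      have ht2 : (m:ℝ) < (T.card : ℝ) + 1 := by
        nlinarith [mul_lt_mul_of_pos_right h2 hm0, inv_mul_cancel₀ (ne_of_gt hm0)]
      have : T.card < m := by exact_mod_cast ht1
      have : m < T.card + 1 := by exact_mod_cast ht2
      omega
    obtain ⟨j, hji, hj0', hjc'⟩ := hexj
    have hij : i ≠ j := hji.symm
    have hj0 : 0 < w j := lt_of_le_of_ne (hw0 j) (Ne.symm hj0')
    have hjc : w j < (m:ℝ)⁻¹ := lt_of_le_of_ne (hw2 j) hjc'
    set ε₁ := min ((m:ℝ)⁻¹ - w i) (w j) with hε₁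
    set ε₂ := min (w i) ((m:ℝ)⁻¹ - w j) with hε₂
    have hε₁0 : 0 < ε₁ := lt_min (by linarith) hj0
    have hε₂0 : 0 < ε₂ := lt_min hi0 (by linarith)
    set y := fun l => w l + ε₁ * ((if l = i then (1:ℝ) else 0) - (if l = j then 1 else 0)) with hy
    set z := fun l => w l + ε₂ * ((if l = j then (1:ℝ) else 0) - (if l = i then 1 else 0)) with hz
    obtain ⟨hy0, hy1, hy2⟩ := s9_move n m w hw0 hw1 hw2 i j hij ε₁ hε₁0.le
      (min_le_left _ _) (min_le_right _ _)
    obtain ⟨hz0, hz1, hz2⟩ := s9_move n m w hw0 hw1 hw2 j i hji ε₂ hε₂0.le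
      (min_le_right _ _) (min_le_left _ _)
    -- fractional sets shrink
    have hsub : ∀ u : Fin n → ℝ, (∀ l, l ≠ i → l ≠ j → u l = w l) →
        Finset.univ.filter (fun l => u l ≠ 0 ∧ u l ≠ (m:ℝ)⁻¹) ⊆
        Finset.univ.filter (fun l => w l ≠ 0 ∧ w l ≠ (m:ℝ)⁻¹) := by
      intro u hu l hl
      have hl' := (Finset.mem_filter.mp hl).2
      by_cases h1 : l = i
      · subst h1; simpa [Finset.mem_filter] using hi'.2
      · by_cases h2 : l = j
        · subst h2; simp [Finset.mem_filter, hj0', hjc']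
        · rw [hu l h1 h2] at hl'
          simp [Finset.mem_filter, hl'.1, hl'.2]
    have hcard_y : (Finset.univ.filter (fun l => y l ≠ 0 ∧ y l ≠ (m:ℝ)⁻¹)).card ≤ d := by
      have hsuby := hsub y (fun l h1 h2 => by simp [hy, h1, h2])
      have hmiss : ∃ l ∈ Finset.univ.filter (fun l => w l ≠ 0 ∧ w l ≠ (m:ℝ)⁻¹),
          l ∉ Finset.univ.filter (fun l => y l ≠ 0 ∧ y l ≠ (m:ℝ)⁻¹) := by
        rcases le_total ((m:ℝ)⁻¹ - w i) (w j) with h | h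
        · refine ⟨i, hi, ?_⟩
          have : y i = (m:ℝ)⁻¹ := by
            simp [hy, hij]
            rw [hε₁, min_eq_left h]; ring
          simp [Finset.mem_filter, this]
        · refine ⟨j, by simp [Finset.mem_filter, hj0', hjc'], ?_⟩
          have : y j = 0 := by
            simp [hy, hji]
            rw [hε₁, min_eq_right h]; ring
          simp [Finset.mem_filter, this]
      obtain ⟨l, hlmem, hlnot⟩ := hmiss
      have := Finset.card_lt_card (Finset.ssubset_iff_of_subset hsuby |>.mpr ⟨l, hlmem, hlnot⟩)
      omega
    have hcard_z : (Finset.univ.filter (fun l => z l ≠ 0 ∧ z l ≠ (m:ℝ)⁻¹)).card ≤ d := by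
      have hsubz := hsub z (fun l h1 h2 => by simp [hz, h1, h2])
      have hmiss : ∃ l ∈ Finset.univ.filter (fun l => w l ≠ 0 ∧ w l ≠ (m:ℝ)⁻¹),
          l ∉ Finset.univ.filter (fun l => z l ≠ 0 ∧ z l ≠ (m:ℝ)⁻¹) := by
        rcases le_total (w i) ((m:ℝ)⁻¹ - w j) with h | h
        · refine ⟨i, hi, ?_⟩
          have : z i = 0 := by
            simp [hz, hij]
            rw [hε₂, min_eq_left h]; ring
          simp [Finset.mem_filter, this]
        · refine ⟨j, by simp [Finset.mem_filter, hj0', hjc'], ?_⟩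
          have : z j = (m:ℝ)⁻¹ := by
            simp [hz, hji]
            rw [hε₂, min_eq_right h]; ring
          simp [Finset.mem_filter, this]
      obtain ⟨l, hlmem, hlnot⟩ := hmiss
      have := Finset.card_lt_card (Finset.ssubset_iff_of_subset hsubz |>.mpr ⟨l, hlmem, hlnot⟩)
      omega
    have hyhull := ih y hy0 hy1 hy2 hcard_y
    have hzhull := ih z hz0 hz1 hz2 hcard_z
    have hs : 0 < ε₁ + ε₂ := by linarith
    have habm : ε₂ / (ε₁ + ε₂) + ε₁ / (ε₁ + ε₂) = 1 := by
      field_simp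
      ring
    have hcomb := (convex_convexHull ℝ _) hyhull hzhull
      (div_nonneg hε₂0.le hs.le) (div_nonneg hε₁0.le hs.le) habm
    have heq : (ε₂ / (ε₁ + ε₂)) • y + (ε₁ / (ε₁ + ε₂)) • z = w := by
      funext l
      simp only [Pi.add_apply, Pi.smul_apply, smul_eq_mul, hy, hz]
      by_cases h1 : l = i
      · subst h1; simp [hij]; field_simp; ring
      · by_cases h2 : l = j
        · subst h2; simp [hji, h1]; field_simp; ring
        · simp [h1, h2]; field_simp; ring
    rwa [heq] at hcomb

/-- The convex hull of the set `W_α` of uniform distributions over subsets of `[n]` of size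
`(1-α)n` is the capped simplex `{w ∈ Δ^{n-1} : w_i ≤ 1/((1-α)n)}`, and the linear maximum
over `W_α` equals the maximum over its convex hull. -/
theorem stmt_9 (n k : ℕ) (α : ℝ) (hα : 0 < α ∧ α < 1) (hk : (k : ℝ) = α * n) (hn : 0 < n) :
    (convexHull ℝ {w : Fin n → ℝ | ∃ S : Finset (Fin n), S.card = n - k ∧
        w = fun i => if i ∈ S then ((n : ℝ) - k)⁻¹ else 0} =
      {w : Fin n → ℝ | (∀ i, 0 ≤ w i) ∧ ∑ i, w i = 1 ∧ ∀ i, w i ≤ ((n : ℝ) - k)⁻¹}) ∧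
    ∀ v : Fin n → ℝ,
      sSup ((fun w : Fin n → ℝ => ∑ i, w i * v i) ''
          {w : Fin n → ℝ | ∃ S : Finset (Fin n), S.card = n - k ∧
            w = fun i => if i ∈ S then ((n : ℝ) - k)⁻¹ else 0}) =
      sSup ((fun w : Fin n → ℝ => ∑ i, w i * v i) ''
          convexHull ℝ {w : Fin n → ℝ | ∃ S : Finset (Fin n), S.card = n - k ∧
            w = fun i => if i ∈ S then ((n : ℝ) - k)⁻¹ else 0}) := by
  obtain ⟨hα0, hα1⟩ := hα
  have hkn : k < n := by
    have hn' : (0:ℝ) < (n:ℝ) := by exact_mod_cast hn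
    have : (k:ℝ) < (n:ℝ) := by rw [hk]; nlinarith
    exact_mod_cast this
  set m := n - k with hmdef
  have hm : 0 < m := by omega
  have hcast : (n:ℝ) - (k:ℝ) = ((m:ℕ):ℝ) := by
    rw [hmdef, Nat.cast_sub hkn.le]
  rw [hcast]
  have hm0 : (0:ℝ) < (m:ℝ) := by exact_mod_cast hm
  have hc0 : (0:ℝ) < (m:ℝ)⁻¹ := by positivity
  set A := {w : Fin n → ℝ | ∃ S : Finset (Fin n), S.card = m ∧
      w = fun i => if i ∈ S then ((m:ℝ))⁻¹ else 0} with hA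
  set T := {w : Fin n → ℝ | (∀ i, 0 ≤ w i) ∧ ∑ i, w i = 1 ∧ ∀ i, w i ≤ ((m:ℝ))⁻¹} with hT
  have hAT : A ⊆ T := by
    rintro w ⟨S, hS, rfl⟩
    refine ⟨fun i => by positivity, ?_, fun i => ?_⟩
    · rw [Finset.sum_ite_mem, Finset.univ_inter, Finset.sum_const, hS, nsmul_eq_mul]
      field_simp
    · by_cases h : i ∈ S
      · simp only [h, if_true]
        exact le_rfl
      · simp only [h, if_false]
        exact hc0.le
  have hTconv : Convex ℝ T := by
    intro x hx y hy a b ha hb hab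
    obtain ⟨hx0, hx1, hx2⟩ := hx
    obtain ⟨hy0, hy1, hy2⟩ := hy
    refine ⟨fun i => ?_, ?_, fun i => ?_⟩
    · simp only [Pi.add_apply, Pi.smul_apply, smul_eq_mul]
      exact add_nonneg (mul_nonneg ha (hx0 i)) (mul_nonneg hb (hy0 i))
    · simp only [Pi.add_apply, Pi.smul_apply, smul_eq_mul]
      rw [Finset.sum_add_distrib, ← Finset.mul_sum, ← Finset.mul_sum, hx1, hy1]
      linarith
    · simp only [Pi.add_apply, Pi.smul_apply, smul_eq_mul]
      calc a * x i + b * y i ≤ a * (m:ℝ)⁻¹ + b * (m:ℝ)⁻¹ :=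
            add_le_add (mul_le_mul_of_nonneg_left (hx2 i) ha)
              (mul_le_mul_of_nonneg_left (hy2 i) hb)
        _ = (m:ℝ)⁻¹ := by rw [← add_mul, hab, one_mul]
  have hhull : convexHull ℝ A = T := by
    apply Set.Subset.antisymm
    · exact convexHull_min hAT hTconv
    · intro w hw
      obtain ⟨hw0, hw1, hw2⟩ := hw
      exact s9_main n m hm (Finset.univ.filter (fun i => w i ≠ 0 ∧ w i ≠ (m:ℝ)⁻¹)).card
        w hw0 hw1 hw2 le_rfl
  refine ⟨hhull, fun v => ?_⟩
  -- A is finite and nonempty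
  have hAfin : A.Finite := by
    have : A ⊆ (fun S : Finset (Fin n) => fun i => if i ∈ S then ((m:ℝ))⁻¹ else 0) ''
        Set.univ := by
      rintro w ⟨S, _, rfl⟩
      exact ⟨S, Set.mem_univ _, rfl⟩
    exact (Set.finite_univ.image _).subset this
  have hAne : A.Nonempty := by
    obtain ⟨S, _, hS⟩ := Finset.exists_subset_card_eq (le_trans (Nat.sub_le n k)
      (by simp [Finset.card_univ]) : m ≤ (Finset.univ : Finset (Fin n)).card)
    exact ⟨_, S, hS, rfl⟩
  set f := fun w : Fin n → ℝ => ∑ i, w i * v i with hf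
  have hBfin : (f '' A).Finite := hAfin.image f
  have hBne : (f '' A).Nonempty := hAne.image f
  have hBbdd : BddAbove (f '' A) := hBfin.bddAbove
  set M := sSup (f '' A) with hM
  have hIic : convexHull ℝ A ⊆ {x | f x ≤ M} := by
    apply convexHull_min
    · intro x hx
      exact le_csSup hBbdd ⟨x, hx, rfl⟩
    · intro x hx y hy a b ha hb hab
      simp only [Set.mem_setOf_eq, hf] at *
      have : ∑ i, (a • x + b • y) i * v i = a * ∑ i, x i * v i + b * ∑ i, y i * v i := by
        simp only [Pi.add_apply, Pi.smul_apply, smul_eq_mul]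
        rw [Finset.mul_sum, Finset.mul_sum, ← Finset.sum_add_distrib]
        exact Finset.sum_congr rfl (fun i _ => by ring)
      rw [this]
      calc a * ∑ i, x i * v i + b * ∑ i, y i * v i ≤ a * M + b * M :=
            add_le_add (mul_le_mul_of_nonneg_left hx ha) (mul_le_mul_of_nonneg_left hy hb)
        _ = M := by rw [← add_mul, hab, one_mul]
  apply le_antisymm
  · apply csSup_le_csSup
    · exact ⟨M, by rintro y ⟨x, hx, rfl⟩; exact hIic hx⟩
    · exact hBne
    · exact Set.image_mono (f := f) (subset_convexHull ℝ A)
  · apply csSup_le ((hAne.mono (subset_convexHull ℝ A)).image f)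
    rintro y ⟨x, hx, rfl⟩
    exact hIic hx
end

section
/- For an integrable random variable Z ∼ P and α ∈ (0,1), the dual representations of the superquantile agree: inf_{η∈ℝ} {η + (1/(1−α)) E[(Z−η)₊]} = sup{E_Q[Z] : Q ≪ P, dQ/dP ≤ 1/(1−α)}. -/
open MeasureTheory

open Set Filter Topology ProbabilityTheory
open scoped ENNReal

namespace CVaRAux

variable {Ω : Type*} [MeasurableSpace Ω] (P : Measure Ω) [IsProbabilityMeasure P]

/-- Weak duality: any admissible `Q` has `E_Q[Z] ≤ η + β⁻¹ E_P[(Z-η)₊]`. -/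
lemma ub {Z : Ω → ℝ} (hZ : Integrable Z P) {β : ℝ} (hβ0 : 0 < β)
    (Q : Measure Ω) [IsProbabilityMeasure Q] (hQP : Q ≪ P)
    (hbd : ∀ᵐ ω ∂P, Q.rnDeriv P ω ≤ ENNReal.ofReal β⁻¹) (η : ℝ) :
    ∫ ω, Z ω ∂Q ≤ η + β⁻¹ * ∫ ω, max (Z ω - η) 0 ∂P := by
  have hβinv : (0:ℝ) ≤ β⁻¹ := inv_nonneg.2 hβ0.le
  have hbd' : ∀ᵐ ω ∂P, (Q.rnDeriv P ω).toReal ≤ β⁻¹ := by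
    filter_upwards [hbd, Measure.rnDeriv_lt_top Q P] with ω h hlt
    calc (Q.rnDeriv P ω).toReal ≤ (ENNReal.ofReal β⁻¹).toReal :=
          ENNReal.toReal_mono ENNReal.ofReal_ne_top h
      _ = β⁻¹ := ENNReal.toReal_ofReal hβinv
  -- integrability of Z w.r.t. Q
  have hZQ : Integrable Z Q := by
    rw [← integrable_rnDeriv_smul_iff hQP]
    refine Integrable.mono (hZ.const_mul β⁻¹) ?_ ?_
    · exact ((Measure.measurable_rnDeriv Q P).ennreal_toReal.aemeasurable.aestronglyMeasurable).smul hZ.1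
    · filter_upwards [hbd', Measure.rnDeriv_lt_top Q P] with ω h hlt
      simp only [smul_eq_mul, norm_mul, Real.norm_eq_abs]
      have h0 : 0 ≤ (Q.rnDeriv P ω).toReal := ENNReal.toReal_nonneg
      rw [abs_of_nonneg h0, abs_of_nonneg hβinv]
      exact mul_le_mul_of_nonneg_right h (abs_nonneg _)
  -- the positive-part function
  set g : Ω → ℝ := fun ω => max (Z ω - η) 0 with hg_def
  have hgP : Integrable g P := (hZ.sub (integrable_const η)).pos_part
  have hg0 : ∀ ω, 0 ≤ g ω := fun ω => le_max_right _ _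
  have hgQ : Integrable g Q := by
    rw [← integrable_rnDeriv_smul_iff hQP]
    refine Integrable.mono (hgP.const_mul β⁻¹) ?_ ?_
    · exact ((Measure.measurable_rnDeriv Q P).ennreal_toReal.aemeasurable.aestronglyMeasurable).smul hgP.1
    · filter_upwards [hbd'] with ω h
      simp only [smul_eq_mul, norm_mul, Real.norm_eq_abs]
      rw [abs_of_nonneg ENNReal.toReal_nonneg, abs_of_nonneg hβinv]
      exact mul_le_mul_of_nonneg_right h (abs_nonneg _)
  -- step 2: E_Q[Z] ≤ η + E_Q[g]
  have step2 : ∫ ω, Z ω ∂Q ≤ η + ∫ ω, g ω ∂Q := by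
    have : ∫ ω, Z ω ∂Q ≤ ∫ ω, (η + g ω) ∂Q := by
      refine integral_mono hZQ ((integrable_const η).add hgQ) fun ω => ?_
      simp only [hg_def]
      rcases le_or_gt (Z ω) η with h | h
      · simpa using h.trans (by simp [hg0])
      · simp [max_eq_left, le_of_lt h, le_max_iff]
    rwa [integral_add (integrable_const η) hgQ, integral_const, probReal_univ,
      one_smul] at this
  -- step 3: E_Q[g] ≤ β⁻¹ E_P[g]
  have step3 : ∫ ω, g ω ∂Q ≤ β⁻¹ * ∫ ω, g ω ∂P := by
    have hgae : AEMeasurable (fun ω => ENNReal.ofReal (g ω)) P :=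
      ENNReal.measurable_ofReal.comp_aemeasurable hgP.1.aemeasurable
    have l1 : ∫⁻ ω, ENNReal.ofReal (g ω) ∂Q = ∫⁻ ω, Q.rnDeriv P ω * ENNReal.ofReal (g ω) ∂P :=
      (lintegral_rnDeriv_mul hQP hgae).symm
    have l2 : ∫⁻ ω, Q.rnDeriv P ω * ENNReal.ofReal (g ω) ∂P
        ≤ ENNReal.ofReal β⁻¹ * ∫⁻ ω, ENNReal.ofReal (g ω) ∂P := by
      rw [← lintegral_const_mul'' _ hgae]
      refine lintegral_mono_ae ?_
      filter_upwards [hbd] with ω h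
      exact mul_le_mul_left h _
    have l3 : ∫⁻ ω, ENNReal.ofReal (g ω) ∂P = ENNReal.ofReal (∫ ω, g ω ∂P) :=
      (ofReal_integral_eq_lintegral_ofReal hgP (ae_of_all _ hg0)).symm
    have l4 : ∫ ω, g ω ∂Q = (∫⁻ ω, ENNReal.ofReal (g ω) ∂Q).toReal :=
      integral_eq_lintegral_of_nonneg_ae (ae_of_all _ hg0) (hgP.1.mono_ac hQP)
    rw [l4]
    calc (∫⁻ ω, ENNReal.ofReal (g ω) ∂Q).toReal
        ≤ (ENNReal.ofReal β⁻¹ * ENNReal.ofReal (∫ ω, g ω ∂P)).toReal := by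
          refine ENNReal.toReal_mono (by finiteness) ?_
          rw [l1, ← l3]; exact l2
      _ = β⁻¹ * ∫ ω, g ω ∂P := by
          rw [← ENNReal.ofReal_mul hβinv, ENNReal.toReal_ofReal]
          exact mul_nonneg hβinv (integral_nonneg hg0)
  calc ∫ ω, Z ω ∂Q ≤ η + ∫ ω, g ω ∂Q := step2
    _ ≤ η + β⁻¹ * ∫ ω, g ω ∂P := by linarith

/-- Construction of the optimal measure from a quantile point. -/
lemma construct {Z : Ω → ℝ} (hZm : Measurable Z) (hZ : Integrable Z P) {β : ℝ}
    (hβ0 : 0 < β) {η : ℝ}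
    (h1 : P {ω | η < Z ω} ≤ ENNReal.ofReal β)
    (h2 : ENNReal.ofReal β ≤ P {ω | η ≤ Z ω}) :
    ∃ Q : Measure Ω, IsProbabilityMeasure Q ∧ Q ≪ P ∧
      (∀ᵐ ω ∂P, Q.rnDeriv P ω ≤ ENNReal.ofReal β⁻¹) ∧
      ∫ ω, Z ω ∂Q = η + β⁻¹ * ∫ ω, max (Z ω - η) 0 ∂P := by
  set β' : ℝ≥0∞ := ENNReal.ofReal β with hβ'_def
  have hβ'0 : β' ≠ 0 := by simp [hβ'_def, ENNReal.ofReal_eq_zero]; linarith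
  have hβ'top : β' ≠ ∞ := ENNReal.ofReal_ne_top
  have hβinv : ENNReal.ofReal β⁻¹ = β'⁻¹ := ENNReal.ofReal_inv_of_pos hβ0
  set A : Set Ω := {ω | η < Z ω} with hA_def
  set B : Set Ω := {ω | Z ω = η} with hB_def
  have hA : MeasurableSet A := measurableSet_lt measurable_const hZm
  have hB : MeasurableSet B := hZm (measurableSet_singleton η)
  have hdisj : Disjoint A B := by
    rw [Set.disjoint_left]
    intro ω hωA hωB
    exact absurd hωB (ne_of_gt hωA)
  have hunion : {ω | η ≤ Z ω} = A ∪ B := by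
    ext ω; simp only [hA_def, hB_def, mem_setOf_eq, mem_union]
    constructor
    · intro h; rcases lt_or_eq_of_le h with h | h
      · exact Or.inl h
      · exact Or.inr h.symm
    · rintro (h | h); exacts [h.le, h.ge]
  set a : ℝ≥0∞ := P A with ha_def
  set b : ℝ≥0∞ := P B with hb_def
  have ha_top : a ≠ ∞ := measure_ne_top P A
  have hb_top : b ≠ ∞ := measure_ne_top P B
  have h1' : a ≤ β' := h1
  have h2' : β' ≤ a + b := by
    calc β' ≤ P {ω | η ≤ Z ω} := h2
      _ = a + b := by rw [hunion, measure_union hdisj hB]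
  have hba : β' - a ≤ b := tsub_le_iff_left.2 h2'
  set c : ℝ≥0∞ := (β' - a) * β'⁻¹ * b⁻¹ with hc_def
  -- key identity
  have key : β'⁻¹ * a + c * b = 1 := by
    by_cases hb : b = 0
    · have haβ : a = β' := le_antisymm h1' (by simpa [hb] using h2')
      have hsub : β' - a = 0 := by simp [haβ]
      simp [hc_def, hsub, hb, haβ, ENNReal.inv_mul_cancel hβ'0 hβ'top, mul_comm]
    · have hcb : c * b = (β' - a) * β'⁻¹ := by
        rw [hc_def, mul_assoc, ENNReal.inv_mul_cancel hb hb_top, mul_one]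
      rw [hcb, mul_comm β'⁻¹ a, ← add_mul, add_tsub_cancel_of_le h1',
        ENNReal.mul_inv_cancel hβ'0 hβ'top]
  have hc_le : c ≤ β'⁻¹ := by
    by_cases hb : b = 0
    · have haβ : a = β' := le_antisymm h1' (by simpa [hb] using h2')
      simp [hc_def, haβ]
    · calc c ≤ b * β'⁻¹ * b⁻¹ := by
            exact mul_le_mul_left (mul_le_mul_left hba _) _
        _ = β'⁻¹ * (b * b⁻¹) := by ring
        _ = β'⁻¹ := by rw [ENNReal.mul_inv_cancel hb hb_top, mul_one]
  -- density
  set g : Ω → ℝ≥0∞ := fun ω => A.indicator (fun _ => β'⁻¹) ω + B.indicator (fun _ => c) ω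
    with hg_def
  have hg_meas : Measurable g :=
    (measurable_const.indicator hA).add (measurable_const.indicator hB)
  have hg_le : ∀ ω, g ω ≤ β'⁻¹ := by
    intro ω
    by_cases hωA : ω ∈ A
    · have hωB : ω ∉ B := fun h => absurd h (Set.disjoint_left.1 hdisj hωA)
      simp [hg_def, hωA, hωB]
    · by_cases hωB : ω ∈ B
      · simpa [hg_def, hωA, hωB] using hc_le
      · simp [hg_def, hωA, hωB]
  set Q : Measure Ω := P.withDensity g with hQ_def
  have hQuniv : Q Set.univ = 1 := by
    rw [hQ_def, withDensity_apply _ MeasurableSet.univ, setLIntegral_univ, hg_def,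
      lintegral_add_left (measurable_const.indicator hA),
      lintegral_indicator_const hA, lintegral_indicator_const hB]
    exact key
  haveI hQprob : IsProbabilityMeasure Q := ⟨hQuniv⟩
  have hQP : Q ≪ P := withDensity_absolutelyContinuous P g
  have hrn : Q.rnDeriv P =ᵐ[P] g := Measure.rnDeriv_withDensity P hg_meas
  have hbd : ∀ᵐ ω ∂P, Q.rnDeriv P ω ≤ ENNReal.ofReal β⁻¹ := by
    filter_upwards [hrn] with ω h
    rw [h, hβinv]; exact hg_le ω
  refine ⟨Q, hQprob, hQP, hbd, ?_⟩
  -- now compute the integral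
  -- finiteness of the two pieces
  have hterm1 : β'⁻¹ * a ≠ ∞ := by
    refine ne_top_of_le_ne_top ENNReal.one_ne_top ?_
    rw [← key]; exact le_add_right le_rfl
  have hterm2 : c * b ≠ ∞ := by
    refine ne_top_of_le_ne_top ENNReal.one_ne_top ?_
    rw [← key]; exact le_add_left le_rfl
  have hc_top : c ≠ ∞ := ne_top_of_le_ne_top (by simp [hβ'0]) hc_le
  have hβ'inv_toReal : (β'⁻¹).toReal = β⁻¹ := by
    rw [← hβinv, ENNReal.toReal_ofReal (inv_nonneg.2 hβ0.le)]
  -- real version of the density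
  set gr : Ω → ℝ := fun ω => A.indicator (fun _ => β⁻¹) ω + B.indicator (fun _ => c.toReal) ω
    with hgr_def
  have hg_toReal : ∀ ω, (g ω).toReal = gr ω := by
    intro ω
    by_cases hωA : ω ∈ A
    · have hωB : ω ∉ B := fun h => absurd h (Set.disjoint_left.1 hdisj hωA)
      simp [hg_def, hgr_def, hωA, hωB, hβ'inv_toReal]
    · by_cases hωB : ω ∈ B
      · simp [hg_def, hgr_def, hωA, hωB]
      · simp [hg_def, hgr_def, hωA, hωB]
  -- integral of Z against Q
  have hint : ∫ ω, Z ω ∂Q = ∫ ω, gr ω * Z ω ∂P := by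
    rw [← integral_rnDeriv_smul hQP]
    refine integral_congr_ae ?_
    filter_upwards [hrn] with ω h
    rw [smul_eq_mul, h, hg_toReal]
  -- split the integral
  have hiA : Integrable (A.indicator fun ω => β⁻¹ * Z ω) P := ((hZ.const_mul β⁻¹).indicator hA)
  have hiB : Integrable (B.indicator fun ω => c.toReal * Z ω) P :=
    ((hZ.const_mul c.toReal).indicator hB)
  have hgr_mul : ∀ ω, gr ω * Z ω =
      A.indicator (fun ω => β⁻¹ * Z ω) ω + B.indicator (fun ω => c.toReal * Z ω) ω := by
    intro ω
    by_cases hωA : ω ∈ A <;> by_cases hωB : ω ∈ B <;>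
      simp [hgr_def, Set.indicator_apply, hωA, hωB, add_mul]
  have hsplit : ∫ ω, gr ω * Z ω ∂P =
      β⁻¹ * ∫ ω in A, Z ω ∂P + c.toReal * ∫ ω in B, Z ω ∂P := by
    rw [show (fun ω => gr ω * Z ω) = fun ω =>
        A.indicator (fun ω => β⁻¹ * Z ω) ω + B.indicator (fun ω => c.toReal * Z ω) ω
      from funext hgr_mul, integral_add hiA hiB, integral_indicator hA, integral_indicator hB,
      integral_const_mul, integral_const_mul]
  -- ∫_B Z = η * (P B).toReal
  have hB_int : ∫ ω in B, Z ω ∂P = η * b.toReal := by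
    rw [setIntegral_congr_fun hB (fun ω hω => hω : Set.EqOn Z (fun _ => η) B),
      setIntegral_const, smul_eq_mul, mul_comm, measureReal_def]
  -- ∫_A Z = ∫ (Z - η)₊ + η * a.toReal
  have hmax_ind : (fun ω => max (Z ω - η) 0) = A.indicator (fun ω => Z ω - η) := by
    funext ω
    by_cases hωA : ω ∈ A
    · simp only [Set.indicator_of_mem hωA]
      exact max_eq_left (sub_nonneg.2 (le_of_lt hωA))
    · simp only [Set.indicator_of_notMem hωA]
      exact max_eq_right (sub_nonpos.2 (not_lt.1 hωA))
  have hA_int : ∫ ω in A, Z ω ∂P = (∫ ω, max (Z ω - η) 0 ∂P) + η * a.toReal := by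
    have e1 : ∫ ω, max (Z ω - η) 0 ∂P = ∫ ω in A, (Z ω - η) ∂P := by
      rw [hmax_ind, integral_indicator hA]
    have e2 : ∫ ω in A, (Z ω - η) ∂P = (∫ ω in A, Z ω ∂P) - ∫ ω in A, (η:ℝ) ∂P :=
      integral_sub hZ.restrict (integrable_const η)
    rw [e1, e2, setIntegral_const, smul_eq_mul, ha_def, measureReal_def]
    ring
  -- the normalization in real numbers
  have hnorm : β⁻¹ * a.toReal + c.toReal * b.toReal = 1 := by
    have := congrArg ENNReal.toReal key
    rwa [ENNReal.toReal_add hterm1 hterm2, ENNReal.toReal_mul, ENNReal.toReal_mul,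
      ENNReal.toReal_one, hβ'inv_toReal] at this
  rw [hint, hsplit, hB_int, hA_int]
  linear_combination η * hnorm

/-- Existence of a quantile point. -/
lemma quantile {Z : Ω → ℝ} (hZm : Measurable Z) {β : ℝ} (hβ0 : 0 < β) (hβ1 : β < 1) :
    ∃ η : ℝ, P {ω | η < Z ω} ≤ ENNReal.ofReal β ∧ ENNReal.ofReal β ≤ P {ω | η ≤ Z ω} := by
  set α : ℝ := 1 - β with hα_def
  have hα0 : 0 < α := by simp [hα_def]; linarith
  have hα1 : α < 1 := by simp [hα_def]; linarith
  set μ : Measure ℝ := P.map Z with hμ_def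
  haveI : IsProbabilityMeasure μ := Measure.isProbabilityMeasure_map hZm.aemeasurable
  set s : Set ℝ := {x | α ≤ cdf μ x} with hs_def
  have hmono : Monotone (cdf μ) := monotone_cdf μ
  have hne : s.Nonempty := by
    have := (tendsto_cdf_atTop μ).eventually (eventually_gt_nhds hα1)
    obtain ⟨x, hx⟩ := this.exists
    exact ⟨x, hx.le⟩
  have hbdd : BddBelow s := by
    have := (tendsto_cdf_atBot μ).eventually (eventually_lt_nhds hα0)
    obtain ⟨x₀, hx₀⟩ := this.exists
    refine ⟨x₀, fun y hy => ?_⟩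
    by_contra hxy
    exact absurd (hy.trans (hmono (le_of_not_ge hxy))) (not_le.2 hx₀)
  set η : ℝ := sInf s with hη_def
  have h_cdf : α ≤ cdf μ η := by
    have hc : ContinuousWithinAt (cdf μ) (Ioi η) η :=
      ((cdf μ).right_continuous η).mono Ioi_subset_Ici_self
    refine ge_of_tendsto hc.tendsto ?_
    filter_upwards [self_mem_nhdsWithin] with x (hx : η < x)
    obtain ⟨y, hy, hyx⟩ := exists_lt_of_csInf_lt hne hx
    exact hy.trans (hmono hyx.le)
  have h_lt : ∀ x < η, cdf μ x < α := by
    intro x hx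
    by_contra h
    exact absurd (csInf_le hbdd (le_of_not_gt h : α ≤ cdf μ x)) (not_le.2 hx)
  have hIic : ∀ x : ℝ, μ (Iic x) = ENNReal.ofReal (cdf μ x) := fun x => (ofReal_cdf μ x).symm
  have hofβ : ENNReal.ofReal β = 1 - ENNReal.ofReal α := by
    have : β = 1 - α := by simp [hα_def]
    rw [this, ENNReal.ofReal_sub 1 hα0.le, ENNReal.ofReal_one]
  refine ⟨η, ?_, ?_⟩
  · -- P {η < Z} = μ (Ioi η) = 1 - μ (Iic η) ≤ 1 - ofReal α = ofReal β
    have hmap : P {ω | η < Z ω} = μ (Ioi η) := by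
      rw [hμ_def, Measure.map_apply hZm measurableSet_Ioi]; rfl
    rw [hmap]
    have : μ (Ioi η) = 1 - μ (Iic η) := by
      rw [← compl_Iic, measure_compl measurableSet_Iic (measure_ne_top μ _), measure_univ]
    rw [this, hIic, hofβ]
    exact tsub_le_tsub_left (ENNReal.ofReal_le_ofReal h_cdf) 1
  · -- μ (Iio η) ≤ ofReal α, so ofReal β ≤ 1 - μ (Iio η) = μ (Ici η) = P {η ≤ Z}
    have hIio : μ (Iio η) ≤ ENNReal.ofReal α := by
      have hcover : Iio η = ⋃ n : ℕ, Iic (η - (1 : ℝ)/(n+1)) := by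
        ext x
        simp only [mem_Iio, mem_iUnion, mem_Iic]
        constructor
        · intro hx
          obtain ⟨n, hn⟩ := exists_nat_one_div_lt (sub_pos.2 hx)
          exact ⟨n, by linarith⟩
        · rintro ⟨n, hn⟩
          have : (0:ℝ) < 1/(n+1) := by positivity
          linarith
      rw [hcover, Directed.measure_iUnion]
      · refine iSup_le fun n => ?_
        rw [hIic]
        refine ENNReal.ofReal_le_ofReal (h_lt _ ?_).le
        have : (0:ℝ) < 1/(n+1) := by positivity
        linarith
      · refine Monotone.directed_le fun m n hmn => Iic_subset_Iic.2 ?_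
        have hc : (m:ℝ) ≤ n := Nat.cast_le.2 hmn
        have h1 : (0:ℝ) < m + 1 := by positivity
        have : (1:ℝ)/(n+1) ≤ 1/(m+1) := by
          apply div_le_div_of_nonneg_left one_pos.le h1
          linarith
        linarith
    have hmap : P {ω | η ≤ Z ω} = μ (Ici η) := by
      rw [hμ_def, Measure.map_apply hZm measurableSet_Ici]; rfl
    rw [hmap]
    have : μ (Ici η) = 1 - μ (Iio η) := by
      rw [← compl_Iio, measure_compl measurableSet_Iio (measure_ne_top μ _), measure_univ]
    rw [this, hofβ]
    exact tsub_le_tsub_left hIio 1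

end CVaRAux

/-- Dual representations of the superquantile (conditional value at risk) agree:
`inf_η {η + (1/(1-α)) E[(Z-η)₊]} = sup {E_Q[Z] : Q ≪ P, dQ/dP ≤ 1/(1-α)}`. -/
theorem stmt_11 {Ω : Type*} [MeasurableSpace Ω] (P : Measure Ω) [IsProbabilityMeasure P]
    (Z : Ω → ℝ) (hZ : Integrable Z P) (α : ℝ) (hα : α ∈ Set.Ioo (0 : ℝ) 1) :
    (⨅ η : ℝ, (η + (1 - α)⁻¹ * ∫ ω, max (Z ω - η) 0 ∂P)) =
      sSup {t : ℝ | ∃ Q : Measure Ω, IsProbabilityMeasure Q ∧ Q ≪ P ∧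
        (∀ᵐ ω ∂P, Q.rnDeriv P ω ≤ ENNReal.ofReal ((1 - α)⁻¹)) ∧ t = ∫ ω, Z ω ∂Q} := by
  obtain ⟨hα0, hα1⟩ := hα
  set β : ℝ := 1 - α with hβ_def
  have hβ0 : 0 < β := by simp [hβ_def]; linarith
  have hβ1 : β < 1 := by simp [hβ_def]; linarith
  -- measurable representative
  set Z' : Ω → ℝ := hZ.1.mk Z with hZ'_def
  have hZ'm : Measurable Z' := hZ.1.stronglyMeasurable_mk.measurable
  have hZZ' : Z =ᵐ[P] Z' := hZ.1.ae_eq_mk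
  have hZ' : Integrable Z' P := hZ.congr hZZ'
  set f : ℝ → ℝ := fun η => η + β⁻¹ * ∫ ω, max (Z ω - η) 0 ∂P with hf_def
  set S : Set ℝ := {t : ℝ | ∃ Q : Measure Ω, IsProbabilityMeasure Q ∧ Q ≪ P ∧
        (∀ᵐ ω ∂P, Q.rnDeriv P ω ≤ ENNReal.ofReal β⁻¹) ∧ t = ∫ ω, Z ω ∂Q} with hS_def
  -- upper bound for members of S
  have hub : ∀ t ∈ S, ∀ η : ℝ, t ≤ f η := by
    rintro t ⟨Q, hQprob, hQP, hbd, rfl⟩ η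
    exact CVaRAux.ub P hZ hβ0 Q hQP hbd η
  -- the optimal measure
  obtain ⟨η₀, hη1, hη2⟩ := CVaRAux.quantile P hZ'm hβ0 hβ1
  obtain ⟨Q₀, hQ₀prob, hQ₀P, hQ₀bd, hQ₀int⟩ := CVaRAux.construct P hZ'm hZ' hβ0 hη1 hη2
  have hZZ'Q : Z =ᵐ[Q₀] Z' := hQ₀P.ae_eq hZZ'
  have hint_eq : ∀ η : ℝ, ∫ ω, max (Z ω - η) 0 ∂P = ∫ ω, max (Z' ω - η) 0 ∂P := fun η =>
    integral_congr_ae (hZZ'.mono fun ω hω => by simp [hω])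
  have ht₀ : ∫ ω, Z ω ∂Q₀ = f η₀ := by
    have hfη : f η₀ = η₀ + β⁻¹ * ∫ ω, max (Z' ω - η₀) 0 ∂P := by
      simp only [hf_def]; rw [hint_eq η₀]
    rw [integral_congr_ae hZZ'Q, hQ₀int, hfη]
  have ht₀S : (∫ ω, Z ω ∂Q₀) ∈ S := ⟨Q₀, hQ₀prob, hQ₀P, hQ₀bd, rfl⟩
  have hSne : S.Nonempty := ⟨_, ht₀S⟩
  have hSbdd : BddAbove S := ⟨f 0, fun t ht => hub t ht 0⟩
  have hfbdd : BddBelow (Set.range f) := by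
    refine ⟨∫ ω, Z ω ∂Q₀, ?_⟩
    rintro y ⟨η, rfl⟩
    exact hub _ ht₀S η
  refine le_antisymm ?_ ?_
  · calc (⨅ η : ℝ, f η) ≤ f η₀ := ciInf_le hfbdd η₀
      _ ≤ sSup S := ht₀ ▸ le_csSup hSbdd ht₀S
  · exact csSup_le hSne fun t ht => le_ciInf (hub t ht)
end
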